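/- With A*_s the multivariate dyadic block kernel (tensor product of one-dimensional kernels ℐ_{s_j}), the sup-norm of the sum over the layer ‖s‖₁ = n+1 satisfies ‖Σ_{‖s‖₁=n+1} A*_s‖_{L_∞(ℝ^d)} ≍ 2^n·n^{d−1}, with implicit constants depending only on d. -/

import Mathlib

open MeasureTheory

/-- The multiplier `k_m`: the Fejér multiplier for `m = 0`, trapezoidal for `m ≥ 1`. -/
noncomputable def multiplier (m : ℕ) (l : ℝ) : ℝ :=
  if m = 0 then (if |l| ≤ 1 then 1 - |l| else 0)
  else if |l| < 2 ^ (m - 1) then 1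
  else if |l| ≤ 2 ^ m then 2 * (1 - |l| / 2 ^ m)
  else 0

/-- The kernel `K_m(t) = ∫ k_m(λ) e^{-2πiλt} dλ`. -/
noncomputable def kernelK (m : ℕ) (t : ℝ) : ℂ :=
  ∫ l : ℝ, (multiplier m l : ℂ) * Complex.exp (-2 * Real.pi * Complex.I * l * t)

/-- The one-dimensional dyadic block kernel `ℐ_s = K_s - K_{s-1}` (with `K_{-1} ≡ 0`). -/
noncomputable def blockKernel (s : ℕ) (t : ℝ) : ℂ :=
  kernelK s t - if s = 0 then 0 else kernelK (s - 1) t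

lemma multiplier_nonneg (m : ℕ) (l : ℝ) : 0 ≤ multiplier m l := by
  unfold multiplier
  split_ifs with h1 h2 h3 h4
  · linarith
  · norm_num
  · norm_num
  · have h2m : (0:ℝ) < 2 ^ m := by positivity
    have : |l| / 2^m ≤ 1 := (div_le_one h2m).2 h4
    linarith
  · norm_num

lemma multiplier_le_one (m : ℕ) (l : ℝ) : multiplier m l ≤ 1 := by
  unfold multiplier
  split_ifs with h1 h2 h3 h4
  · linarith [abs_nonneg l]
  · norm_num
  · norm_num
  · push_neg at h3
    have hm : m - 1 + 1 = m := Nat.succ_pred_eq_of_pos (Nat.pos_of_ne_zero h1)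
    have h2m : (0:ℝ) < 2 ^ m := by positivity
    have hhalf : (2:ℝ) ^ (m-1) = 2^m / 2 := by
      rw [eq_div_iff (by norm_num), ← pow_succ, hm]
    have h4' : 2^m / 2 ≤ |l| := hhalf ▸ h3
    have : (1:ℝ)/2 ≤ |l| / 2^m := by
      rw [div_le_div_iff₀ (by norm_num) h2m]; linarith
    linarith
  · norm_num

lemma multiplier_eq_zero {m : ℕ} {l : ℝ} (h : (2:ℝ)^m < |l|) : multiplier m l = 0 := by
  unfold multiplier
  have h1 : (2:ℝ)^(m-1) ≤ 2^m := pow_le_pow_right₀ (by norm_num) (Nat.sub_le m 1)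
  split_ifs with h0 ha hb hc
  · exfalso; rw [h0] at h; norm_num at h; linarith
  · rfl
  · exfalso; linarith
  · exfalso; linarith
  · rfl

lemma multiplier_measurable (m : ℕ) : Measurable (multiplier m) := by
  have habs : Measurable fun l : ℝ => |l| := continuous_abs.measurable
  unfold multiplier
  rcases eq_or_ne m 0 with h | h
  · simp only [h, if_true, reduceIte]
    exact Measurable.ite (measurableSet_le habs measurable_const)
      (measurable_const.sub habs) measurable_const
  · simp only [h, if_false, reduceIte]
    refine Measurable.ite (measurableSet_lt habs measurable_const) measurable_const ?_
    exact Measurable.ite (measurableSet_le habs measurable_const)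
      ((measurable_const.sub (habs.div_const _)).const_mul 2) measurable_const
lemma multiplier_integrable (m : ℕ) : Integrable (multiplier m) := by
  set b : ℝ := 2^m with hb
  have hble : (0:ℝ) ≤ b := by positivity
  refine Integrable.mono' (g := Set.indicator (Set.Icc (-b) b) fun _ => (1:ℝ)) ?_ ?_ ?_
  · have : IntegrableOn (fun _ : ℝ => (1:ℝ)) (Set.Icc (-b) b) volume :=
      integrableOn_const measure_Icc_lt_top.ne
    exact this.integrable_indicator measurableSet_Icc
  · exact (multiplier_measurable m).aestronglyMeasurable
  · refine Filter.Eventually.of_forall fun l => ?_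
    rw [Real.norm_eq_abs, abs_of_nonneg (multiplier_nonneg m l)]
    by_cases h : l ∈ Set.Icc (-b) b
    · rw [Set.indicator_of_mem h]; exact multiplier_le_one m l
    · rw [Set.indicator_of_notMem h, multiplier_eq_zero]
      simp only [Set.mem_Icc, not_and_or, not_le] at h
      rcases h with h | h
      · rw [abs_of_nonpos (by linarith)]; linarith
      · rw [abs_of_nonneg (by linarith)]; linarith

lemma integral_linear (a b c e : ℝ) :
    ∫ x in a..b, (c + e * x) = c * (b - a) + e * (b^2 - a^2) / 2 := by
  have h1 : IntervalIntegrable (fun _ : ℝ => c) volume a b := intervalIntegrable_const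
  have h2 : IntervalIntegrable (fun x : ℝ => e * x) volume a b :=
    (intervalIntegral.intervalIntegrable_id (μ := volume) (a := a) (b := b)).const_mul e
  rw [intervalIntegral.integral_add h1 h2, intervalIntegral.integral_const,
    intervalIntegral.integral_const_mul, integral_id, smul_eq_mul]
  ring

lemma multiplier_zero_eval {l : ℝ} (h : |l| ≤ 1) : multiplier 0 l = 1 - |l| := by
  simp [multiplier, h]

lemma integral_multiplier_zero : ∫ l, multiplier 0 l = 1 := by
  have hind : multiplier 0 = Set.indicator (Set.Ioc (-1 : ℝ) 1) (multiplier 0) := by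
    funext l
    by_cases h : l ∈ Set.Ioc (-1:ℝ) 1
    · rw [Set.indicator_of_mem h]
    · rw [Set.indicator_of_notMem h]
      simp only [Set.mem_Ioc, not_and_or, not_lt, not_le] at h
      rcases h with h | h
      · rcases lt_or_eq_of_le h with h' | h'
        · exact multiplier_eq_zero (by rw [abs_of_nonpos (by linarith)]; norm_num; linarith)
        · rw [multiplier_zero_eval (by rw [h']; norm_num), h']; norm_num
      · exact multiplier_eq_zero (by rw [abs_of_nonneg (by linarith)]; simpa using h)
  rw [hind, integral_indicator measurableSet_Ioc, ← intervalIntegral.integral_of_le (by norm_num)]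
  have hii : ∀ u v : ℝ, IntervalIntegrable (multiplier 0) volume u v :=
    fun u v => (multiplier_integrable 0).intervalIntegrable
  rw [← intervalIntegral.integral_add_adjacent_intervals (b := 0) (hii _ _) (hii _ _)]
  have e1 : ∫ l in (-1:ℝ)..0, multiplier 0 l = ∫ l in (-1:ℝ)..0, (1 + 1 * l) := by
    apply intervalIntegral.integral_congr
    intro l hl
    rw [Set.uIcc_of_le (by norm_num)] at hl
    rw [multiplier_zero_eval (abs_le.2 ⟨hl.1, le_trans hl.2 (by norm_num)⟩),
      abs_of_nonpos hl.2]; ring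
  have e2 : ∫ l in (0:ℝ)..1, multiplier 0 l = ∫ l in (0:ℝ)..1, (1 + (-1) * l) := by
    apply intervalIntegral.integral_congr
    intro l hl
    rw [Set.uIcc_of_le (by norm_num)] at hl
    rw [multiplier_zero_eval (abs_le.2 ⟨le_trans (by norm_num) hl.1, hl.2⟩),
      abs_of_nonneg hl.1]; ring
  rw [e1, e2, integral_linear, integral_linear]; norm_num

lemma multiplier_eval_plateau {m : ℕ} (hm : m ≠ 0) {l : ℝ} (h : |l| ≤ 2^(m-1)) :
    multiplier m l = 1 := by
  have hm1 : m - 1 + 1 = m := Nat.succ_pred_eq_of_pos (Nat.pos_of_ne_zero hm)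
  have hb : (2:ℝ)^m = 2 * 2^(m-1) := by rw [mul_comm, ← pow_succ, hm1]
  unfold multiplier
  rw [if_neg hm]
  rcases lt_or_eq_of_le h with h' | h'
  · rw [if_pos h']
  · have ha : (0:ℝ) < 2^(m-1) := by positivity
    rw [if_neg (by rw [h']; exact lt_irrefl _), if_pos (by rw [h', hb]; linarith), h', hb]
    field_simp; ring

lemma multiplier_eval_slope {m : ℕ} (hm : m ≠ 0) {l : ℝ} (h1 : 2^(m-1) ≤ |l|)
    (h2 : |l| ≤ 2^m) : multiplier m l = 2 * (1 - |l| / 2^m) := by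
  unfold multiplier
  rw [if_neg hm]
  rcases lt_or_eq_of_le h1 with h' | h'
  · rw [if_neg (not_lt.2 h'.le), if_pos h2]
  · have hm1 : m - 1 + 1 = m := Nat.succ_pred_eq_of_pos (Nat.pos_of_ne_zero hm)
    have hb : (2:ℝ)^m = 2 * 2^(m-1) := by rw [mul_comm, ← pow_succ, hm1]
    have ha : (0:ℝ) < 2^(m-1) := by positivity
    rw [if_neg (by rw [← h']; exact lt_irrefl _), if_pos h2]

lemma integral_multiplier_pos {m : ℕ} (hm : m ≠ 0) :
    ∫ l, multiplier m l = 3 * 2^(m-1) := by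
  set a : ℝ := 2^(m-1) with hadef
  set b : ℝ := 2^m with hbdef
  have hm1 : m - 1 + 1 = m := Nat.succ_pred_eq_of_pos (Nat.pos_of_ne_zero hm)
  have hb2a : b = 2 * a := by rw [hbdef, hadef, mul_comm, ← pow_succ, hm1]
  have ha : (0:ℝ) < a := by rw [hadef]; positivity
  have hbpos : (0:ℝ) < b := by linarith
  have hind : multiplier m = Set.indicator (Set.Ioc (-b) b) (multiplier m) := by
    funext l
    by_cases h : l ∈ Set.Ioc (-b) b
    · rw [Set.indicator_of_mem h]
    · rw [Set.indicator_of_notMem h]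
      simp only [Set.mem_Ioc, not_and_or, not_lt, not_le] at h
      rcases h with h | h
      · rcases lt_or_eq_of_le h with h' | h'
        · exact multiplier_eq_zero (by rw [abs_of_nonpos (by linarith)]; rw [← hbdef]; linarith)
        · rw [multiplier_eval_slope hm (l := l) (by rw [h', abs_neg, abs_of_pos hbpos]; linarith)
            (by rw [h', abs_neg, abs_of_pos hbpos]),
            h', abs_neg, abs_of_pos hbpos]
          field_simp; rw [← hbdef]; ring
      · exact multiplier_eq_zero (by rw [← hbdef, abs_of_pos (by linarith)]; linarith)
  rw [hind, integral_indicator measurableSet_Ioc, ← intervalIntegral.integral_of_le (by linarith)]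
  have hii : ∀ u v : ℝ, IntervalIntegrable (multiplier m) volume u v :=
    fun u v => (multiplier_integrable m).intervalIntegrable
  rw [← intervalIntegral.integral_add_adjacent_intervals (a := -b) (b := -a) (c := b)
      (hii _ _) (hii _ _),
    ← intervalIntegral.integral_add_adjacent_intervals (a := -a) (b := a) (c := b)
      (hii _ _) (hii _ _)]
  have e1 : ∫ l in (-b)..(-a), multiplier m l = ∫ l in (-b)..(-a), (2 + (2/b) * l) := by
    apply intervalIntegral.integral_congr
    intro l hl
    rw [Set.uIcc_of_le (by linarith)] at hl
    have habs : |l| = -l := abs_of_nonpos (by linarith [hl.2])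
    rw [multiplier_eval_slope hm (by rw [habs, ← hadef]; linarith [hl.2])
      (by rw [habs, ← hbdef]; linarith [hl.1]), habs]
    field_simp; ring
  have e2 : ∫ l in (-a)..a, multiplier m l = ∫ l in (-a)..a, (1 + 0 * l) := by
    apply intervalIntegral.integral_congr
    intro l hl
    rw [Set.uIcc_of_le (by linarith)] at hl
    rw [multiplier_eval_plateau hm (by rw [← hadef]; exact abs_le.2 ⟨hl.1, hl.2⟩)]
    ring
  have e3 : ∫ l in a..b, multiplier m l = ∫ l in a..b, (2 + (-(2/b)) * l) := by
    apply intervalIntegral.integral_congr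
    intro l hl
    rw [Set.uIcc_of_le (by linarith)] at hl
    have habs : |l| = l := abs_of_nonneg (by linarith [hl.1])
    rw [multiplier_eval_slope hm (by rw [habs, ← hadef]; linarith [hl.1])
      (by rw [habs, ← hbdef]; linarith [hl.2]), habs]
    field_simp; ring
  rw [e1, e2, e3, integral_linear, integral_linear, integral_linear, hb2a]
  have : a ≠ 0 := ne_of_gt ha
  field_simp
  ring

lemma norm_exp_eq_one (l t : ℝ) :
    ‖Complex.exp (-2 * Real.pi * Complex.I * l * t)‖ = 1 := by
  rw [Complex.norm_exp]
  have : (-2 * (Real.pi:ℂ) * Complex.I * l * t).re = 0 := by simp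
  rw [this, Real.exp_zero]

lemma norm_integrand (m : ℕ) (t : ℝ) (l : ℝ) :
    ‖(multiplier m l : ℂ) * Complex.exp (-2 * Real.pi * Complex.I * l * t)‖
      = multiplier m l := by
  rw [norm_mul, norm_exp_eq_one, mul_one, Complex.norm_real, Real.norm_eq_abs,
    abs_of_nonneg (multiplier_nonneg m l)]

lemma integrand_integrable (m : ℕ) (t : ℝ) :
    Integrable (fun l : ℝ => (multiplier m l : ℂ) * Complex.exp (-2 * Real.pi * Complex.I * l * t)) := by
  have hmeas : AEStronglyMeasurable
      (fun l : ℝ => (multiplier m l : ℂ) * Complex.exp (-2 * Real.pi * Complex.I * l * t)) volume := by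
    apply AEStronglyMeasurable.mul
    · exact (Complex.measurable_ofReal.comp (multiplier_measurable m)).aestronglyMeasurable
    · exact (Complex.continuous_exp.comp (by continuity)).aestronglyMeasurable
  refine Integrable.mono' (multiplier_integrable m) hmeas ?_
  exact Filter.Eventually.of_forall fun l => le_of_eq (norm_integrand m t l)

lemma norm_kernelK_le (m : ℕ) (t : ℝ) : ‖kernelK m t‖ ≤ ∫ l, multiplier m l := by
  refine le_trans (norm_integral_le_integral_norm _) (le_of_eq ?_)
  simp_rw [norm_integrand]

lemma kernelK_zero_eq (m : ℕ) : kernelK m 0 = ((∫ l, multiplier m l : ℝ) : ℂ) := by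
  unfold kernelK
  have h1 : (∫ l : ℝ, (multiplier m l : ℂ) * Complex.exp (-2 * Real.pi * Complex.I * l * (0:ℝ)))
      = ∫ l : ℝ, ((multiplier m l : ℝ) : ℂ) := by
    apply integral_congr_ae
    refine Filter.Eventually.of_forall fun l => ?_
    show (multiplier m l : ℂ) * Complex.exp (-2 * Real.pi * Complex.I * l * ((0:ℝ):ℂ)) = _
    rw [show (-2 * (Real.pi:ℂ) * Complex.I * l * ((0:ℝ):ℂ) : ℂ) = 0 by push_cast; ring,
      Complex.exp_zero, mul_one]
  rw [h1]
  exact integral_ofReal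

lemma kernelK_continuous (m : ℕ) : Continuous (kernelK m) := by
  apply continuous_of_dominated (bound := multiplier m)
  · exact fun t => (integrand_integrable m t).aestronglyMeasurable
  · exact fun t => Filter.Eventually.of_forall fun l => le_of_eq (norm_integrand m t l)
  · exact multiplier_integrable m
  · exact Filter.Eventually.of_forall fun l => by continuity

noncomputable def Breal : ℕ → ℝ
  | 0 => 1
  | 1 => 2
  | (k+2) => 3 * 2^k

lemma blockKernel_continuous (s : ℕ) : Continuous (blockKernel s) := by
  unfold blockKernel
  rcases eq_or_ne s 0 with h | h <;> simp only [h, if_true, if_false, reduceIte]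
  · simpa using kernelK_continuous 0
  · exact (kernelK_continuous s).sub (kernelK_continuous (s-1))

lemma blockKernel_zero_eq (s : ℕ) : blockKernel s 0 = ((Breal s : ℝ) : ℂ) := by
  match s with
  | 0 => simp [blockKernel, kernelK_zero_eq, integral_multiplier_zero, Breal]
  | 1 =>
    simp only [blockKernel, reduceIte, kernelK_zero_eq, Breal]
    rw [integral_multiplier_pos (by norm_num), integral_multiplier_zero]
    norm_num
  | (k+2) =>
    simp only [blockKernel, reduceIte, kernelK_zero_eq, Breal]
    rw [integral_multiplier_pos (by omega), integral_multiplier_pos (by omega)]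
    rw [if_neg (show ¬k+2=0 by omega), ← Complex.ofReal_sub]
    rw [show k+2-1 = k+1 by omega, show k+1-1 = k by omega, Complex.ofReal_inj, pow_succ]
    ring
  
lemma Breal_lower (s : ℕ) : (3/4) * 2^s ≤ Breal s := by
  match s with
  | 0 => norm_num [Breal]
  | 1 => norm_num [Breal]
  | (k+2) => simp only [Breal]; rw [pow_succ, pow_succ]; nlinarith [pow_pos (show (0:ℝ) < 2 by norm_num) k]

lemma Breal_upper (s : ℕ) : Breal s ≤ 2^s := by
  match s with
  | 0 => norm_num [Breal]
  | 1 => norm_num [Breal]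
  | (k+2) => simp only [Breal]; rw [pow_succ, pow_succ]; nlinarith [pow_pos (show (0:ℝ) < 2 by norm_num) k]

lemma integral_multiplier_le (m : ℕ) : ∫ l, multiplier m l ≤ 3 * 2^m := by
  rcases eq_or_ne m 0 with h | h
  · rw [h, integral_multiplier_zero]; norm_num
  · rw [integral_multiplier_pos h]
    have : (2:ℝ)^(m-1) ≤ 2^m := pow_le_pow_right₀ (by norm_num) (Nat.sub_le m 1)
    linarith

lemma norm_blockKernel_le (s : ℕ) (t : ℝ) : ‖blockKernel s t‖ ≤ 6 * 2^s := by
  unfold blockKernel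
  have h1 := (norm_kernelK_le s t).trans (integral_multiplier_le s)
  rcases eq_or_ne s 0 with h | h <;> simp only [h, if_true, if_false, reduceIte]
  · rw [sub_zero]; subst h; simpa using h1.trans (by norm_num)
  · have h2 := (norm_kernelK_le (s-1) t).trans (integral_multiplier_le (s-1))
    have h3 : (2:ℝ)^(s-1) ≤ 2^s := pow_le_pow_right₀ (by norm_num) (Nat.sub_le s 1)
    calc ‖kernelK s t - kernelK (s-1) t‖ ≤ ‖kernelK s t‖ + ‖kernelK (s-1) t‖ := norm_sub_le _ _
    _ ≤ 6 * 2^s := by linarith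

lemma ofReal_norm_le_eLpNormEssSup {X E : Type*} [TopologicalSpace X] [MeasurableSpace X]
    [NormedAddCommGroup E] (μ : Measure X) [μ.IsOpenPosMeasure] {f : X → E}
    (hf : Continuous f) (x₀ : X) : ENNReal.ofReal ‖f x₀‖ ≤ eLpNormEssSup f μ := by
  by_contra hlt
  push_neg at hlt
  set M := eLpNormEssSup f μ with hM
  have hMtop : M ≠ ⊤ := (hlt.trans_le le_top).ne
  have hMlt : M.toReal < ‖f x₀‖ := by
    have h := ENNReal.toReal_strict_mono (by simp) hlt
    rwa [ENNReal.toReal_ofReal (norm_nonneg _)] at h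
  set U : Set X := {x | M.toReal < ‖f x‖} with hU
  have hUopen : IsOpen U := isOpen_lt continuous_const hf.norm
  have hUpos : 0 < μ U := hUopen.measure_pos μ ⟨x₀, hMlt⟩
  have hae : ∀ᵐ y ∂μ, ‖f y‖ ≤ M.toReal := by
    filter_upwards [ae_le_eLpNormEssSup (f := f) (μ := μ)] with y hy
    have h2 := ENNReal.toReal_mono hMtop hy
    simpa using h2
  have : μ U = 0 := by
    refine measure_mono_null (fun x hx => ?_) (ae_iff.mp hae)
    exact not_le.2 hx
  exact absurd this hUpos.ne'

lemma card_antidiagonalTuple_le (D n : ℕ) :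
    (Finset.Nat.antidiagonalTuple (D+1) (n+1)).card ≤ (n+2)^D := by
  classical
  have hmem : ∀ s ∈ Finset.Nat.antidiagonalTuple (D+1) (n+1), ∀ j, s j < n + 2 := by
    intro s hs j
    rw [Finset.Nat.mem_antidiagonalTuple] at hs
    have := Finset.single_le_sum (f := s) (fun i _ => Nat.zero_le _) (Finset.mem_univ j)
    omega
  have := Finset.card_le_card_of_injOn
    (f := fun s : Fin (D+1) → ℕ => fun i : Fin D => s i.castSucc)
    (t := (Finset.univ : Finset (Fin D → Fin (n+2))).image
      (fun a : Fin D → Fin (n+2) => fun i => (a i : ℕ)))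
    (fun s hs => Finset.mem_image.2 ⟨fun i => ⟨s i.castSucc, hmem s hs i.castSucc⟩,
      Finset.mem_univ _, rfl⟩)
    ?_
  · calc (Finset.Nat.antidiagonalTuple (D+1) (n+1)).card
        ≤ _ := this
    _ ≤ (Finset.univ : Finset (Fin D → Fin (n+2))).card := Finset.card_image_le
    _ = (n+2)^D := by simp
  · intro s hs s' hs' h
    rw [Finset.mem_coe, Finset.Nat.mem_antidiagonalTuple] at hs hs'
    funext j
    refine Fin.lastCases ?_ (fun i => congrFun h i) j
    have h1 := Fin.sum_univ_castSucc (f := s)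
    have h2 := Fin.sum_univ_castSucc (f := s')
    have h3 : ∑ i : Fin D, s i.castSucc = ∑ i : Fin D, s' i.castSucc :=
      Finset.sum_congr rfl (fun i _ => congrFun h i)
    omega

lemma card_antidiagonalTuple_ge (D n q : ℕ) (hq : D * (q-1) ≤ n+1) :
    q^D ≤ (Finset.Nat.antidiagonalTuple (D+1) (n+1)).card := by
  classical
  have hsum : ∀ a : Fin D → Fin q, ∑ i, (a i : ℕ) ≤ n+1 := by
    intro a
    calc ∑ i, (a i : ℕ) ≤ ∑ _i : Fin D, (q-1) :=
      Finset.sum_le_sum (fun i _ => by have := (a i).2; omega)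
    _ = D * (q-1) := by simp [Finset.sum_const, mul_comm]
    _ ≤ n+1 := hq
  have hmaps : ∀ a : Fin D → Fin q,
      (Fin.snoc (fun i => (a i : ℕ)) (n+1 - ∑ i, (a i : ℕ)) : Fin (D+1) → ℕ)
        ∈ Finset.Nat.antidiagonalTuple (D+1) (n+1) := by
    intro a
    rw [Finset.Nat.mem_antidiagonalTuple, Fin.sum_univ_castSucc]
    simp only [Fin.snoc_castSucc, Fin.snoc_last]
    have := hsum a
    omega
  have hinj : Set.InjOn
      (fun a : Fin D → Fin q =>
        (Fin.snoc (fun i => (a i : ℕ)) (n+1 - ∑ i, (a i : ℕ)) : Fin (D+1) → ℕ))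
      (Finset.univ : Finset (Fin D → Fin q)) := by
    intro a _ a' _ h
    funext i
    have := congrFun h i.castSucc
    simpa [Fin.snoc_castSucc, Fin.ext_iff] using this
  have := Finset.card_le_card_of_injOn _ (fun a _ => hmaps a) hinj
  simpa using this

theorem stmt_10 (d : ℕ) (hd : 1 ≤ d) :
    ∃ C₁ C₂ : ℝ, 0 < C₁ ∧ 0 < C₂ ∧ ∀ n : ℕ, 1 ≤ n →
      ENNReal.ofReal (C₁ * 2 ^ n * (n : ℝ) ^ (d - 1)) ≤
        eLpNorm (fun x : Fin d → ℝ =>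
          ∑ s ∈ Finset.Nat.antidiagonalTuple d (n + 1),
            ∏ j, blockKernel (s j) (x j)) ⊤ volume ∧
      eLpNorm (fun x : Fin d → ℝ =>
          ∑ s ∈ Finset.Nat.antidiagonalTuple d (n + 1),
            ∏ j, blockKernel (s j) (x j)) ⊤ volume ≤
        ENNReal.ofReal (C₂ * 2 ^ n * (n : ℝ) ^ (d - 1)) := by
  obtain ⟨D, rfl⟩ : ∃ D, d = D + 1 := ⟨d - 1, by omega⟩
  have hDD : (0:ℝ) < (D:ℝ)^D := by
    rcases Nat.eq_zero_or_pos D with h | h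
    · simp [h]
    · have : (0:ℝ) < (D:ℝ) := by exact_mod_cast h
      positivity
  refine ⟨(3/4)^(D+1) * 2 / (D:ℝ)^D, 3^D * 6^(D+1) * 2, by positivity, by positivity,
    fun n hn => ?_⟩
  simp only [Nat.add_sub_cancel]
  set T := Finset.Nat.antidiagonalTuple (D+1) (n+1) with hT
  set f : (Fin (D+1) → ℝ) → ℂ := fun x => ∑ s ∈ T, ∏ j, blockKernel (s j) (x j) with hfdef
  have hcont : Continuous f :=
    continuous_finset_sum _ fun s _ =>
      continuous_finset_prod _ fun j _ =>
        (blockKernel_continuous (s j)).comp (continuous_apply j)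
  have hn1 : (1:ℝ) ≤ (n:ℝ) := by exact_mod_cast hn
  constructor
  · -- lower bound
    -- value at zero
    have hprod0 : ∀ s : Fin (D+1) → ℕ,
        (∏ j, blockKernel (s j) ((0 : Fin (D+1) → ℝ) j)) = ((∏ j, Breal (s j) : ℝ) : ℂ) := by
      intro s
      rw [Complex.ofReal_prod]
      exact Finset.prod_congr rfl fun j _ => by rw [Pi.zero_apply, blockKernel_zero_eq]
    have hf0 : f 0 = ((∑ s ∈ T, ∏ j, Breal (s j) : ℝ) : ℂ) := by
      rw [hfdef, Complex.ofReal_sum]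
      exact Finset.sum_congr rfl fun s _ => hprod0 s
    set g : ℝ := ∑ s ∈ T, ∏ j, Breal (s j) with hg
    -- per-term lower bound
    have hterm : ∀ s ∈ T, (3/4 : ℝ)^(D+1) * 2^(n+1) ≤ ∏ j, Breal (s j) := by
      intro s hs
      rw [hT, Finset.Nat.mem_antidiagonalTuple] at hs
      calc (3/4 : ℝ)^(D+1) * 2^(n+1)
          = ∏ j : Fin (D+1), ((3/4 : ℝ) * 2^(s j)) := by
            rw [Finset.prod_mul_distrib, Finset.prod_const, Finset.prod_pow_eq_pow_sum,
              Finset.card_univ, Fintype.card_fin, hs]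
      _ ≤ ∏ j, Breal (s j) :=
            Finset.prod_le_prod (fun j _ => by positivity) (fun j _ => Breal_lower (s j))
    have hcard_g : (T.card : ℝ) * ((3/4 : ℝ)^(D+1) * 2^(n+1)) ≤ g := by
      have := Finset.card_nsmul_le_sum T (fun s => ∏ j, Breal (s j))
        ((3/4 : ℝ)^(D+1) * 2^(n+1)) hterm
      simpa [nsmul_eq_mul] using this
    -- cardinality lower bound
    have hcard : (n:ℝ)^D ≤ (T.card : ℝ) * (D:ℝ)^D := by
      rcases Nat.eq_zero_or_pos D with hD | hD
    
      · subst hD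
        have h1 : 1 ≤ T.card := card_antidiagonalTuple_ge 0 n 1 (by omega)
        simpa using (by exact_mod_cast h1 : (1:ℝ) ≤ (T.card:ℝ))
      · set q : ℕ := n / D + 1 with hq
        have hcard1 : q^D ≤ T.card := by
          apply card_antidiagonalTuple_ge
          have : D * (q - 1) = n / D * D := by rw [hq]; simp [mul_comm]
          rw [this]
          have := Nat.div_mul_le_self n D
          omega
        have hnq : (n:ℝ) ≤ (D:ℝ) * q := by
          have h2 : n < D * q := by
            have h3 := Nat.div_add_mod n D
            have h4 : n % D < D := Nat.mod_lt n hD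
            calc n = D * (n / D) + n % D := h3.symm
            _ < D * (n / D) + D := by omega
            _ = D * q := by rw [hq]; ring
          exact_mod_cast h2.le
        calc (n:ℝ)^D ≤ ((D:ℝ) * q)^D := by
              apply pow_le_pow_left₀ (by positivity) hnq
        _ = (q:ℝ)^D * (D:ℝ)^D := by rw [mul_pow]; ring
        _ ≤ (T.card : ℝ) * (D:ℝ)^D := by
              apply mul_le_mul_of_nonneg_right _ hDD.le
              have : ((q:ℝ))^D ≤ ((T.card : ℕ) : ℝ) := by exact_mod_cast hcard1
              exact this
            
    have hglb : (3/4 : ℝ)^(D+1) * 2 / (D:ℝ)^D * 2^n * (n:ℝ)^D ≤ g := by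
      have h5 : (n:ℝ)^D / (D:ℝ)^D ≤ (T.card : ℝ) := by
        rw [div_le_iff₀ hDD]
        exact hcard
      calc (3/4 : ℝ)^(D+1) * 2 / (D:ℝ)^D * 2^n * (n:ℝ)^D
          = ((n:ℝ)^D / (D:ℝ)^D) * ((3/4 : ℝ)^(D+1) * 2^(n+1)) := by
            rw [pow_succ]; ring
      _ ≤ (T.card : ℝ) * ((3/4 : ℝ)^(D+1) * 2^(n+1)) := by
            apply mul_le_mul_of_nonneg_right h5 (by positivity)
      _ ≤ g := hcard_g
    have hnorm0 : (3/4 : ℝ)^(D+1) * 2 / (D:ℝ)^D * 2^n * (n:ℝ)^D ≤ ‖f 0‖ := by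
      rw [hf0, Complex.norm_real, Real.norm_eq_abs]
      exact hglb.trans (le_abs_self g)
    calc ENNReal.ofReal ((3/4 : ℝ)^(D+1) * 2 / (D:ℝ)^D * 2^n * (n:ℝ)^D)
        ≤ ENNReal.ofReal ‖f 0‖ := ENNReal.ofReal_le_ofReal hnorm0
    _ ≤ eLpNormEssSup f volume := ofReal_norm_le_eLpNormEssSup volume hcont 0
    _ = eLpNorm f ⊤ volume := (eLpNorm_exponent_top).symm
  · -- upper bound
    have hterm : ∀ x : Fin (D+1) → ℝ, ∀ s ∈ T,
        ‖∏ j, blockKernel (s j) (x j)‖ ≤ (6:ℝ)^(D+1) * 2^(n+1) := by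
      intro x s hs
      rw [hT, Finset.Nat.mem_antidiagonalTuple] at hs
      calc ‖∏ j, blockKernel (s j) (x j)‖ = ∏ j, ‖blockKernel (s j) (x j)‖ := norm_prod _ _
      _ ≤ ∏ j : Fin (D+1), ((6:ℝ) * 2^(s j)) :=
            Finset.prod_le_prod (fun j _ => norm_nonneg _)
              (fun j _ => norm_blockKernel_le (s j) (x j))
      _ = (6:ℝ)^(D+1) * 2^(n+1) := by
            rw [Finset.prod_mul_distrib, Finset.prod_const, Finset.prod_pow_eq_pow_sum,
              Finset.card_univ, Fintype.card_fin, hs]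
    have hcard_ub : (T.card : ℝ) ≤ 3^D * (n:ℝ)^D := by
      have h1 : (T.card : ℝ) ≤ ((n:ℝ)+2)^D := by
        exact_mod_cast card_antidiagonalTuple_le D n
      calc (T.card : ℝ) ≤ ((n:ℝ)+2)^D := h1
      _ ≤ (3 * (n:ℝ))^D := by
            apply pow_le_pow_left₀ (by positivity) (by linarith)
      _ = 3^D * (n:ℝ)^D := mul_pow _ _ _
    have hnorm : ∀ x : Fin (D+1) → ℝ, ‖f x‖ ≤ 3^D * 6^(D+1) * 2 * 2^n * (n:ℝ)^D := by
      intro x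
      calc ‖f x‖ ≤ ∑ s ∈ T, ‖∏ j, blockKernel (s j) (x j)‖ := norm_sum_le _ _
      _ ≤ ∑ _s ∈ T, (6:ℝ)^(D+1) * 2^(n+1) := Finset.sum_le_sum (hterm x)
      _ = (T.card : ℝ) * ((6:ℝ)^(D+1) * 2^(n+1)) := by
            rw [Finset.sum_const, nsmul_eq_mul]
      _ ≤ (3^D * (n:ℝ)^D) * ((6:ℝ)^(D+1) * 2^(n+1)) := by
            apply mul_le_mul_of_nonneg_right hcard_ub (by positivity)
      _ = 3^D * 6^(D+1) * 2 * 2^n * (n:ℝ)^D := by rw [pow_succ]; ring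
    have := eLpNorm_le_of_ae_bound (μ := volume) (p := ⊤)
      (Filter.Eventually.of_forall hnorm)
    simpa using this
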